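/- Suppose max_{j∈{1,…,m}} ( ν_j + Σ_{i≠j} ζ_i ) < 1. Then the Gram matrix K_S^H K_S of the union S = S_1 ∪ … ∪ S_m is invertible and for every index j ∉ S, ‖(K_S^H K_S)^{-1} K_S^H k_j‖₁ ≤ (Σ_{j=1}^m ζ_j) / (1 − max_{j} ( ν_j + Σ_{i≠j} ζ_i )). -/

import Mathlib

open Matrix Finset

noncomputable section

/-- The Hermitian inner product `⟨u,v⟩ = ∑ l, conj (u l) * v l` on `ℂ^L`. -/
def ipC {L : ℕ} (u v : Fin L → ℂ) : ℂ := ∑ l, star (u l) * v l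

/-- The `j`-th column `k_j` of the dictionary `K`. -/
def col {L N : ℕ} (K : Matrix (Fin L) (Fin N) ℂ) (j : Fin N) : Fin L → ℂ := fun l => K l j

/-- The submatrix `K_S` of the columns of `K` indexed by `S`. -/
def subMat {L N : ℕ} (K : Matrix (Fin L) (Fin N) ℂ) (S : Finset (Fin N)) :
    Matrix (Fin L) {j : Fin N // j ∈ S} ℂ := Matrix.of fun l j => K l j.1

/-- The Gram matrix `K_Sᴴ K_S`. -/
def gram {L N : ℕ} (K : Matrix (Fin L) (Fin N) ℂ) (S : Finset (Fin N)) :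
    Matrix {j : Fin N // j ∈ S} {j : Fin N // j ∈ S} ℂ := (subMat K S)ᴴ * subMat K S

/-- The vector `(K_Sᴴ K_S)⁻¹ K_Sᴴ k_j`. -/
def ercVec {L N : ℕ} (K : Matrix (Fin L) (Fin N) ℂ) (S : Finset (Fin N)) (j : Fin N) :
    {i : Fin N // i ∈ S} → ℂ := ((gram K S)⁻¹ * (subMat K S)ᴴ) *ᵥ _root_.col K j

/-- The ℓ1 norm of a complex vector, as a real number. -/
def l1 {ι : Type} [Fintype ι] (v : ι → ℂ) : ℝ := ∑ i, ‖v i‖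

/-- The ℓ1 norm of a complex vector, as a nonnegative real number. -/
def l1n {ι : Type} [Fintype ι] (v : ι → ℂ) : NNReal := ∑ i, ‖v i‖₊

lemma ipC_norm_comm {L : ℕ} (u v : Fin L → ℂ) : ‖ipC u v‖ = ‖ipC v u‖ := by
  have : ipC v u = star (ipC u v) := by
    simp [ipC, star_sum, mul_comm]
  rw [this, norm_star]

lemma gram_apply {L N : ℕ} (K : Matrix (Fin L) (Fin N) ℂ) (S : Finset (Fin N))
    (i l : {j : Fin N // j ∈ S}) : gram K S i l = ipC (_root_.col K i.1) (_root_.col K l.1) := by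
  simp [_root_.gram, ipC, _root_.col, subMat, Matrix.mul_apply, Matrix.conjTranspose_apply]

lemma gram_diag {L N : ℕ} (K : Matrix (Fin L) (Fin N) ℂ)
    (hunit : ∀ j : Fin N, ∑ l, ‖K l j‖ ^ 2 = 1) (S : Finset (Fin N))
    (i : {j : Fin N // j ∈ S}) : gram K S i i = 1 := by
  rw [gram_apply]
  have : ipC (_root_.col K i.1) (_root_.col K i.1) = ((∑ l, ‖K l i.1‖ ^ 2 : ℝ) : ℂ) := by
    push_cast
    simp [ipC, _root_.col, Complex.conj_mul', Complex.sq_norm]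
  rw [this, hunit]
  norm_num

lemma sum_ite_eq_erase {α β : Type*} [DecidableEq α] [AddCommMonoid β] (s : Finset α) (a : α)
    (f : α → β) (ha : a ∈ s) :
    (∑ x ∈ s, if x = a then 0 else f x) = ∑ x ∈ s.erase a, f x := by
  rw [← Finset.sum_erase_add _ _ ha, if_pos rfl, add_zero]
  exact Finset.sum_congr rfl fun x hx => if_neg (Finset.ne_of_mem_erase hx)

/-- equation (42), the intermediate bound of Theorem 2: for index
sets `S_1, …, S_m` with union `S`, restricted inter-coherences `ζ_j` and restricted
intra-coherences `ν_j`, if `max_j (ν_j + ∑_{i ≠ j} ζ_i) < 1` then `K_Sᴴ K_S` is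
invertible and for every `j ∉ S`,
`‖(K_Sᴴ K_S)⁻¹ K_Sᴴ k_j‖₁ ≤ (∑_j ζ_j) / (1 - max_j (ν_j + ∑_{i ≠ j} ζ_i))`. -/
theorem stmt6 (L N m : ℕ) (hL : 1 ≤ L) (hN : 1 ≤ N) (hm : 1 ≤ m)
    (K : Matrix (Fin L) (Fin N) ℂ)
    (hunit : ∀ j : Fin N, ∑ l, ‖K l j‖ ^ 2 = 1)
    (Ssets : Fin m → Finset (Fin N))
    (S : Finset (Fin N)) (hS : S = Finset.univ.biUnion Ssets)
    (ζ ν : Fin m → ℝ)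
    (hζ : ∀ j, ζ j =
      (((Ssets j)ᶜ.sup fun i => ∑ l ∈ Ssets j, ‖ipC (_root_.col K i) (_root_.col K l)‖₊ : NNReal) : ℝ))
    (hν : ∀ j, ν j =
      (((Ssets j).sup fun i => ∑ l ∈ (Ssets j).erase i, ‖ipC (_root_.col K i) (_root_.col K l)‖₊ : NNReal) : ℝ))
    (B : ℝ)
    (hB : B = Finset.univ.sup' (Finset.univ_nonempty_iff.mpr ⟨⟨0, hm⟩⟩)
      (fun j => ν j + ∑ i ∈ Finset.univ.erase j, ζ i))
    (hB1 : B < 1) :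
    IsUnit (gram K S) ∧
    ∀ j ∉ S, l1 (ercVec K S j) ≤ (∑ j, ζ j) / (1 - B) := by
  have hsub : ∀ j, Ssets j ⊆ S := fun j => hS ▸ Finset.subset_biUnion_of_mem Ssets (mem_univ j)
  have hζ0 : ∀ j, 0 ≤ ζ j := fun j => (hζ j) ▸ NNReal.coe_nonneg _
  have hν0 : ∀ j, 0 ≤ ν j := fun j => (hν j) ▸ NNReal.coe_nonneg _
  set Z : ℝ := ∑ j, ζ j with hZ
  have hZ0 : 0 ≤ Z := Finset.sum_nonneg fun j _ => hζ0 j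
  have hBd : ∀ j, ν j + (Z - ζ j) ≤ B := by
    intro j
    rw [hB]
    have := Finset.le_sup' (fun j => ν j + ∑ i ∈ Finset.univ.erase j, ζ i) (mem_univ j)
    rwa [Finset.sum_erase_eq_sub (mem_univ j)] at this
  -- `ζ` bound used for any atom not in `Ssets j`
  have hζbound : ∀ (j : Fin m) (a : Fin N), a ∉ Ssets j →
      (∑ l ∈ Ssets j, ‖ipC (_root_.col K a) (_root_.col K l)‖) ≤ ζ j := by
    intro j a ha
    rw [hζ j]
    have hle := Finset.le_sup (f := fun i => ∑ l ∈ Ssets j, ‖ipC (_root_.col K i) (_root_.col K l)‖₊)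
      (Finset.mem_compl.mpr ha)
    have := NNReal.coe_le_coe.mpr hle
    rwa [NNReal.coe_sum] at this
  have hνbound : ∀ (j : Fin m) (a : Fin N), a ∈ Ssets j →
      (∑ l ∈ (Ssets j).erase a, ‖ipC (_root_.col K a) (_root_.col K l)‖) ≤ ν j := by
    intro j a ha
    rw [hν j]
    have hle := Finset.le_sup
      (f := fun i => ∑ l ∈ (Ssets j).erase i, ‖ipC (_root_.col K i) (_root_.col K l)‖₊) ha
    have := NNReal.coe_le_coe.mpr hle
    rwa [NNReal.coe_sum] at this
  -- the key estimate
  have key : ∀ (x bb : {i : Fin N // i ∈ S} → ℂ), gram K S *ᵥ x = bb → ∀ c : ℝ,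
      (∀ j : Fin m, (∑ i : {i : Fin N // i ∈ S}, if i.1 ∈ Ssets j then ‖bb i‖ else 0) ≤ c * ζ j) →
      l1 x * (1 - B) ≤ c * Z := by
    intro x bb hxb c hb
    set T : ℝ := l1 x with hTdef
    have hT0 : 0 ≤ T := Finset.sum_nonneg fun _ _ => norm_nonneg _
    set t : Fin m → ℝ := fun j => ∑ i : {i : Fin N // i ∈ S}, if i.1 ∈ Ssets j then ‖x i‖ else 0
      with htdef
    have ht0 : ∀ j, 0 ≤ t j := fun j =>
      Finset.sum_nonneg fun _ _ => by positivity
    have htT : ∀ j, t j ≤ T :=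
      fun j => Finset.sum_le_sum fun i _ => by split <;> simp [norm_nonneg]
    -- pointwise bound
    have hpt : ∀ i, ‖x i‖ ≤ ‖bb i‖ +
        ∑ l : {i : Fin N // i ∈ S}, (if l = i then 0 else ‖gram K S i l‖ * ‖x l‖) := by
      intro i
      have hxi : x i = bb i - ∑ l ∈ Finset.univ.erase i, gram K S i l * x l := by
        have h0 := congrFun hxb i
        simp only [Matrix.mulVec, dotProduct] at h0
        rw [← Finset.add_sum_erase _ _ (mem_univ i), gram_diag K hunit S i, one_mul] at h0
        linear_combination h0
      rw [sum_ite_eq_erase Finset.univ i (fun l => ‖gram K S i l‖ * ‖x l‖) (mem_univ i)]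
      calc ‖x i‖ = ‖bb i - ∑ l ∈ Finset.univ.erase i, gram K S i l * x l‖ := by rw [← hxi]
        _ ≤ ‖bb i‖ + ‖∑ l ∈ Finset.univ.erase i, gram K S i l * x l‖ := norm_sub_le _ _
        _ ≤ ‖bb i‖ + ∑ l ∈ Finset.univ.erase i, ‖gram K S i l * x l‖ :=
            add_le_add_right (norm_sum_le _ _) _
        _ = ‖bb i‖ + ∑ l ∈ Finset.univ.erase i, ‖gram K S i l‖ * ‖x l‖ := by
            simp [norm_mul]
    -- coefficient bound
    have hcoef : ∀ (j : Fin m) (l : {i : Fin N // i ∈ S}),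
        (∑ i : {i : Fin N // i ∈ S},
          if i.1 ∈ Ssets j then (if l = i then 0 else ‖gram K S i l‖) else 0)
        ≤ (if l.1 ∈ Ssets j then ν j else ζ j) := by
      intro j l
      have hrw : (∑ i : {i : Fin N // i ∈ S},
          if i.1 ∈ Ssets j then (if l = i then 0 else ‖gram K S i l‖) else 0)
          = ∑ a ∈ Ssets j,
            (if a = l.1 then 0 else ‖ipC (_root_.col K l.1) (_root_.col K a)‖) := by
        have h1 : ∀ i : {i : Fin N // i ∈ S},
            (if i.1 ∈ Ssets j then (if l = i then 0 else ‖gram K S i l‖) else 0)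
            = (fun a => if a ∈ Ssets j then
                (if a = l.1 then 0 else ‖ipC (_root_.col K l.1) (_root_.col K a)‖) else 0) i.1 := by
          intro i
          simp only
          by_cases hmem : i.1 ∈ Ssets j
          · rw [if_pos hmem, if_pos hmem]
            by_cases heq : l = i
            · rw [if_pos heq, if_pos (by rw [heq])]
            · rw [if_neg heq, if_neg (fun h => heq (Subtype.ext h.symm)), _root_.gram_apply,
                ipC_norm_comm]
          · rw [if_neg hmem, if_neg hmem]
        rw [Finset.sum_congr rfl fun i _ => h1 i]
        rw [Finset.univ_eq_attach, Finset.sum_attach S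
          (fun a => if a ∈ Ssets j then
            (if a = l.1 then 0 else ‖ipC (_root_.col K l.1) (_root_.col K a)‖) else 0)]
        rw [Finset.sum_ite_mem, Finset.inter_eq_right.mpr (hsub j)]
      rw [hrw]
      by_cases hl : l.1 ∈ Ssets j
      · rw [if_pos hl, sum_ite_eq_erase _ _ _ hl]
        exact hνbound j l.1 hl
      · rw [if_neg hl]
        have : ∀ a ∈ Ssets j,
            (if a = l.1 then 0 else ‖ipC (_root_.col K l.1) (_root_.col K a)‖)
            = ‖ipC (_root_.col K l.1) (_root_.col K a)‖ := by
          intro a ha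
          exact if_neg (fun h => hl (by rw [← h]; exact ha))
        rw [Finset.sum_congr rfl this]
        exact hζbound j l.1 hl
    -- group inequality
    have hgroup : ∀ j, t j ≤ c * ζ j + (ν j * t j + ζ j * (T - t j)) := by
      intro j
      have step1 : t j ≤ (∑ i : {i : Fin N // i ∈ S}, if i.1 ∈ Ssets j then ‖bb i‖ else 0)
          + ∑ i : {i : Fin N // i ∈ S}, (if i.1 ∈ Ssets j then
              (∑ l : {i : Fin N // i ∈ S}, (if l = i then 0 else ‖gram K S i l‖ * ‖x l‖))
              else 0) := by
        rw [← Finset.sum_add_distrib]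
        refine Finset.sum_le_sum fun i _ => ?_
        by_cases hmem : i.1 ∈ Ssets j
        · simp only [if_pos hmem]
          exact hpt i
        · simp [if_neg hmem]
      have step2 : (∑ i : {i : Fin N // i ∈ S}, (if i.1 ∈ Ssets j then
              (∑ l : {i : Fin N // i ∈ S}, (if l = i then 0 else ‖gram K S i l‖ * ‖x l‖))
              else 0)) ≤ ν j * t j + ζ j * (T - t j) := by
        have hsw : (∑ i : {i : Fin N // i ∈ S}, (if i.1 ∈ Ssets j then
              (∑ l : {i : Fin N // i ∈ S}, (if l = i then 0 else ‖gram K S i l‖ * ‖x l‖))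
              else 0))
            = ∑ l : {i : Fin N // i ∈ S}, (∑ i : {i : Fin N // i ∈ S},
                (if i.1 ∈ Ssets j then (if l = i then 0 else ‖gram K S i l‖) else 0)) * ‖x l‖ := by
          calc (∑ i : {i : Fin N // i ∈ S}, (if i.1 ∈ Ssets j then
              (∑ l : {i : Fin N // i ∈ S}, (if l = i then 0 else ‖gram K S i l‖ * ‖x l‖))
              else 0))
              = ∑ i : {i : Fin N // i ∈ S}, ∑ l : {i : Fin N // i ∈ S},
                  (if i.1 ∈ Ssets j then (if l = i then 0 else ‖gram K S i l‖ * ‖x l‖) else 0) := by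
                refine Finset.sum_congr rfl fun i _ => ?_
                split
                · rfl
                · simp
            _ = ∑ l : {i : Fin N // i ∈ S}, ∑ i : {i : Fin N // i ∈ S},
                  (if i.1 ∈ Ssets j then (if l = i then 0 else ‖gram K S i l‖ * ‖x l‖) else 0) :=
                Finset.sum_comm
            _ = ∑ l : {i : Fin N // i ∈ S}, (∑ i : {i : Fin N // i ∈ S},
                (if i.1 ∈ Ssets j then (if l = i then 0 else ‖gram K S i l‖) else 0)) * ‖x l‖ := by
                refine Finset.sum_congr rfl fun l _ => ?_
                rw [Finset.sum_mul]
                refine Finset.sum_congr rfl fun i _ => ?_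
                by_cases hmem : i.1 ∈ Ssets j
                · by_cases heq : l = i
                  · simp [hmem, heq]
                  · simp [hmem, heq]
                · simp [hmem]
        rw [hsw]
        calc (∑ l : {i : Fin N // i ∈ S}, (∑ i : {i : Fin N // i ∈ S},
                (if i.1 ∈ Ssets j then (if l = i then 0 else ‖gram K S i l‖) else 0)) * ‖x l‖)
            ≤ ∑ l : {i : Fin N // i ∈ S}, (if l.1 ∈ Ssets j then ν j else ζ j) * ‖x l‖ :=
              Finset.sum_le_sum fun l _ =>
                mul_le_mul_of_nonneg_right (hcoef j l) (norm_nonneg _)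
          _ = ν j * t j + ζ j * (T - t j) := by
              have expand : ∀ l : {i : Fin N // i ∈ S},
                  (if l.1 ∈ Ssets j then ν j else ζ j) * ‖x l‖
                  = ν j * (if l.1 ∈ Ssets j then ‖x l‖ else 0)
                    + ζ j * (‖x l‖ - (if l.1 ∈ Ssets j then ‖x l‖ else 0)) := by
                intro l; split <;> ring
              rw [Finset.sum_congr rfl fun l _ => expand l, Finset.sum_add_distrib,
                ← Finset.mul_sum, ← Finset.mul_sum, Finset.sum_sub_distrib]
              simp only [htdef, hTdef, l1]
      linarith [hb j, step1, step2]
    -- covering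
    have hcover : T ≤ ∑ j, t j := by
      have h1 : ∀ i : {i : Fin N // i ∈ S},
          ‖x i‖ ≤ ∑ j : Fin m, (if i.1 ∈ Ssets j then ‖x i‖ else 0) := by
        intro i
        obtain ⟨j0, -, hj0⟩ := Finset.mem_biUnion.mp (by rw [← hS]; exact i.2)
        have := Finset.single_le_sum (f := fun j => if i.1 ∈ Ssets j then ‖x i‖ else 0)
          (fun j _ => by positivity) (mem_univ j0)
        simpa only [hj0, if_true, if_pos] using this
      calc T = ∑ i, ‖x i‖ := by rw [hTdef]; rfl
        _ ≤ ∑ i, ∑ j, (if i.1 ∈ Ssets j then ‖x i‖ else 0) := Finset.sum_le_sum fun i _ => h1 i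
        _ = ∑ j, t j := Finset.sum_comm
    have hj2 : ∀ j, t j * (1 - B + Z) ≤ ζ j * (c + T) := by
      intro j
      have h1 := hgroup j
      have h2 := hBd j
      have h3 := ht0 j
      nlinarith [mul_le_mul_of_nonneg_left (show (1:ℝ) - B + Z ≤ 1 - ν j + ζ j by linarith) h3,
        h1]
    have hfin : T * (1 - B + Z) ≤ Z * (c + T) := by
      calc T * (1 - B + Z) ≤ (∑ j, t j) * (1 - B + Z) :=
            mul_le_mul_of_nonneg_right hcover (by linarith)
        _ = ∑ j, t j * (1 - B + Z) := Finset.sum_mul _ _ _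
        _ ≤ ∑ j, ζ j * (c + T) := Finset.sum_le_sum fun j _ => hj2 j
        _ = Z * (c + T) := by rw [hZ, Finset.sum_mul]
    nlinarith [hfin]
  -- invertibility
  have hker : ∀ x : {i : Fin N // i ∈ S} → ℂ, gram K S *ᵥ x = 0 → x = 0 := by
    intro x hx
    have h := key x 0 hx 0 (fun j => by simp)
    have h0 : 0 ≤ l1 x := Finset.sum_nonneg fun _ _ => norm_nonneg _
    have hl1 : l1 x = 0 := by nlinarith
    funext i
    have := (Finset.sum_eq_zero_iff_of_nonneg (fun i _ => norm_nonneg (x i))).mp hl1 i (mem_univ i)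
    simpa using this
  have hU : IsUnit (gram K S) := by
    apply Matrix.mulVec_injective_iff_isUnit.mp
    intro a b hab
    have hz : gram K S *ᵥ (a - b) = 0 := by
      rw [Matrix.mulVec_sub]
      change gram K S *ᵥ a - gram K S *ᵥ b = 0 at *
      rw [hab, sub_self]
    exact sub_eq_zero.mp (hker _ hz)
  refine ⟨hU, ?_⟩
  intro j0 hj0
  have hdet : IsUnit (gram K S).det := (Matrix.isUnit_iff_isUnit_det _).mp hU
  have hxb : gram K S *ᵥ ercVec K S j0 = (subMat K S)ᴴ *ᵥ _root_.col K j0 := by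
    rw [ercVec, Matrix.mulVec_mulVec, ← Matrix.mul_assoc, Matrix.mul_nonsing_inv _ hdet,
      Matrix.one_mul]
  have hbap : ∀ i : {i : Fin N // i ∈ S}, ((subMat K S)ᴴ *ᵥ _root_.col K j0) i
      = ipC (_root_.col K i.1) (_root_.col K j0) := by
    intro i
    simp [Matrix.mulVec, dotProduct, subMat, Matrix.conjTranspose_apply, ipC, _root_.col]
  have hbnd : ∀ j : Fin m, (∑ i : {i : Fin N // i ∈ S},
      if i.1 ∈ Ssets j then ‖((subMat K S)ᴴ *ᵥ _root_.col K j0) i‖ else 0) ≤ 1 * ζ j := by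
    intro j
    rw [one_mul]
    have hrw : (∑ i : {i : Fin N // i ∈ S},
        if i.1 ∈ Ssets j then ‖((subMat K S)ᴴ *ᵥ _root_.col K j0) i‖ else 0)
        = ∑ a ∈ Ssets j, ‖ipC (_root_.col K a) (_root_.col K j0)‖ := by
      have h1 : ∀ i : {i : Fin N // i ∈ S},
          (if i.1 ∈ Ssets j then ‖((subMat K S)ᴴ *ᵥ _root_.col K j0) i‖ else 0)
          = (fun a => if a ∈ Ssets j then ‖ipC (_root_.col K a) (_root_.col K j0)‖ else 0) i.1 :=
        fun i => by rw [hbap i]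
      rw [Finset.sum_congr rfl fun i _ => h1 i, Finset.univ_eq_attach,
        Finset.sum_attach S (fun a => if a ∈ Ssets j
          then ‖ipC (_root_.col K a) (_root_.col K j0)‖ else 0),
        Finset.sum_ite_mem, Finset.inter_eq_right.mpr (hsub j)]
    rw [hrw]
    have hj0n : j0 ∉ Ssets j := fun h => hj0 (hsub j h)
    calc (∑ a ∈ Ssets j, ‖ipC (_root_.col K a) (_root_.col K j0)‖)
        = ∑ a ∈ Ssets j, ‖ipC (_root_.col K j0) (_root_.col K a)‖ :=
          Finset.sum_congr rfl fun a _ => ipC_norm_comm _ _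
      _ ≤ ζ j := hζbound j j0 hj0n
  have hres := key _ _ hxb 1 hbnd
  rw [one_mul] at hres
  rw [le_div_iff₀ (by linarith)]
  exact hres
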